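/- arXiv:2601.03987 — 3 statements merged into one kernel-verified Lean document; each statement's English description precedes it below -/
import Mathlib

section
/- Let M = [[A,B],[C,D]] be a 2n×2n unitary matrix written in n×n block form, and suppose the blocks A and D are invertible. Then det M = det D / det(A*) and det M = det A / det(D*). -/
open MeasureTheory Matrix Filter
open scoped Real ENNReal Topology ComplexOrder

noncomputable section

namespace NLFT

instance : MeasurableSpace Circle := borel Circle
instance : BorelSpace Circle := ⟨rfl⟩

/-- The Haar probability measure on the unit circle `𝕋`. -/
def μ : Measure Circle :=
  Measure.map AddCircle.toCircle (@AddCircle.haarAddCircle (2 * Real.pi) ⟨Real.two_pi_pos⟩)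

/-- `n × n` complex matrices. -/
abbrev Mat (n : ℕ) := Matrix (Fin n) (Fin n) ℂ

/-- `2n × 2n` complex matrices, written in `2 × 2` block form. -/
abbrev Mat2 (n : ℕ) := Matrix (Fin n ⊕ Fin n) (Fin n ⊕ Fin n) ℂ

/-- The Hilbert–Schmidt norm `‖·‖₂` of a matrix. -/
def hsNorm {ι κ : Type*} [Fintype ι] [Fintype κ] (M : Matrix ι κ ℂ) : ℝ :=
  Real.sqrt (∑ i, ∑ j, ‖M i j‖ ^ 2)

/-- The operator norm `‖·‖_∞` (largest singular value) of a matrix. -/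
def opNorm {ι : Type*} [Fintype ι] [DecidableEq ι] (M : Matrix ι ι ℂ) : ℝ :=
  ‖toEuclideanCLM (𝕜 := ℂ) M‖

/-- A matrix is contractive if its operator norm is `< 1`. -/
def Contractive {ι : Type*} [Fintype ι] [DecidableEq ι] (M : Matrix ι ι ℂ) : Prop :=
  opNorm M < 1

/-- Membership in `𝓖₀` (upper triangular, `a = 0`) or `𝓖₁` (lower triangular, `a = 1`):
triangular with strictly positive (real) diagonal entries. -/
def Triangular {n : ℕ} (a : Fin 2) (M : Mat n) : Prop :=
  (∀ i j : Fin n, (if a = 0 then j < i else i < j) → M i j = 0) ∧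
  ∀ i, 0 < (M i i).re ∧ (M i i).im = 0

/-- A square matrix is unitary. -/
def IsUnitary {ι : Type*} [Fintype ι] [DecidableEq ι] (M : Matrix ι ι ℂ) : Prop :=
  Mᴴ * M = 1

/-- A square matrix is special unitary. -/
def IsSU {ι : Type*} [Fintype ι] [DecidableEq ι] (M : Matrix ι ι ℂ) : Prop :=
  IsUnitary M ∧ M.det = 1

/-- Membership in `SU_α(2n)`. -/
def IsSUa {n : ℕ} (α : Fin 2 → Fin 2) (M : Mat2 n) : Prop :=
  IsSU M ∧ Triangular (α 0) M.toBlocks₁₁ ∧ Triangular (α 1) M.toBlocks₂₂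

/-- The `k`-th Fourier coefficient `X̂(k) = ∫_𝕋 X(z) z^{-k}` of a matrix-valued function,
computed entrywise. -/
def mFourierCoeff {ι κ : Type*} [Fintype ι] [Fintype κ] (X : Circle → Matrix ι κ ℂ) (k : ℤ) :
    Matrix ι κ ℂ :=
  Matrix.of fun i j => ∫ z : Circle, (z : ℂ) ^ (-k) * X z i j ∂μ

/-- All entries square integrable on the circle. -/
def MemL2 {ι κ : Type*} [Fintype ι] [Fintype κ] (X : Circle → Matrix ι κ ℂ) : Prop :=
  ∀ i j, MemLp (fun z => X z i j) 2 μ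

/-- Membership in the matrix Hardy space `H²(𝔻)` (boundary-value formulation). -/
def InH2 {ι κ : Type*} [Fintype ι] [Fintype κ] (X : Circle → Matrix ι κ ℂ) : Prop :=
  MemL2 X ∧ ∀ k : ℤ, k < 0 → mFourierCoeff X k = 0

/-- Membership in `H²(𝔻*)` (boundary-value formulation). -/
def InH2star {ι κ : Type*} [Fintype ι] [Fintype κ] (X : Circle → Matrix ι κ ℂ) : Prop :=
  MemL2 X ∧ ∀ k : ℤ, 0 < k → mFourierCoeff X k = 0

/-- The outerness condition `log |det X̂(0)| = ∫_𝕋 log |det X|`. -/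
def IsOuter {ι : Type*} [Fintype ι] [DecidableEq ι] (X : Circle → Matrix ι ι ℂ) : Prop :=
  Real.log ‖(mFourierCoeff X 0).det‖ =
    ∫ z : Circle, Real.log ‖(X z).det‖ ∂μ

/-- Pointwise conjugate transpose of a matrix-valued function. -/
def cT {ι κ : Type*} (X : Circle → Matrix ι κ ℂ) : Circle → Matrix κ ι ℂ :=
  fun z => (X z)ᴴ

/-- Entrywise a.e. measurability. -/
def AEMeas {ι κ : Type*} (X : Circle → Matrix ι κ ℂ) : Prop :=
  ∀ i j, AEMeasurable (fun z => X z i j) μ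

/-- A measurable matrix function `B : 𝕋 → 𝓒` is Szegő if `∫_𝕋 log det (Id - BB*) > -∞`,
i.e. the (a.e. nonpositive) function `log det (Id - BB*)` is integrable. -/
def Szego {n : ℕ} (B : Circle → Mat n) : Prop :=
  AEMeas B ∧ (∀ᵐ z ∂μ, Contractive (B z)) ∧
    Integrable (fun z => Real.log ‖(1 - B z * (B z)ᴴ).det‖) μ

/-- Upper left `n × n` block of a `2n × 2n` matrix-valued function. -/
def blockA {n : ℕ} (M : Circle → Mat2 n) : Circle → Mat n := fun z => (M z).toBlocks₁₁

/-- Upper right block. -/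
def blockB {n : ℕ} (M : Circle → Mat2 n) : Circle → Mat n := fun z => (M z).toBlocks₁₂

/-- Lower left block. -/
def blockC {n : ℕ} (M : Circle → Mat2 n) : Circle → Mat n := fun z => (M z).toBlocks₂₁

/-- Lower right block. -/
def blockD {n : ℕ} (M : Circle → Mat2 n) : Circle → Mat n := fun z => (M z).toBlocks₂₂

/-- Membership in `𝐁_α`. -/
def MemB {n : ℕ} (α : Fin 2 → Fin 2) (M : Circle → Mat2 n) : Prop :=
  (∀ i j, AEMeasurable (fun z => M z i j) μ) ∧
  (∀ᵐ z ∂μ, IsSU (M z)) ∧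
  Szego (blockB M) ∧ Szego (blockC M) ∧
  InH2 (cT (blockA M)) ∧ IsOuter (cT (blockA M)) ∧
  InH2 (blockD M) ∧ IsOuter (blockD M) ∧
  Triangular (α 0) (mFourierCoeff (blockA M) 0) ∧
  Triangular (α 1) (mFourierCoeff (blockD M) 0)

open Classical in
/-- `Y_α(F)`: the unique element of `SU_α(2n)` with upper right block `F`. -/
def Yc {n : ℕ} (α : Fin 2 → Fin 2) (F : Mat n) : Mat2 n :=
  if h : ∃ M : Mat2 n, IsSUa α M ∧ M.toBlocks₁₂ = F then h.choose else 1

/-- The conjugation `Ad(w)` acting on `2n × 2n` block matrices. -/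
def Ad {n : ℕ} (w : ℂ) (M : Mat2 n) : Mat2 n :=
  Matrix.fromBlocks M.toBlocks₁₁ (w • M.toBlocks₁₂) (w⁻¹ • M.toBlocks₂₁) M.toBlocks₂₂

/-- The ordered product `∏_{j=c}^{d} Ad(z^j) Y_α(F_j)`. -/
def nlftOn {n : ℕ} (α : Fin 2 → Fin 2) (F : ℤ → Mat n) (c d : ℤ) (z : Circle) : Mat2 n :=
  (((Finset.Icc c d).sort (· ≤ ·)).map fun j => Ad ((z : ℂ) ^ j) (Yc α (F j))).prod

open Classical in
/-- A bound for the support of a finitely supported sequence. -/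
def suppBound {n : ℕ} (F : ℤ → Mat n) : ℕ :=
  if h : (Function.support F).Finite then h.toFinset.sup fun j => j.natAbs else 0

/-- The nonlinear Fourier transform `𝓕_α(F)` of a finitely supported sequence of
contractive matrices. -/
def nlft {n : ℕ} (α : Fin 2 → Fin 2) (F : ℤ → Mat n) (z : Circle) : Mat2 n :=
  nlftOn α F (-(suppBound F : ℤ)) (suppBound F : ℤ) z

/-- The metric `d` on matrix functions on the circle. -/
def metricD {n : ℕ} (M M' : Circle → Mat2 n) : ℝ :=
  Real.sqrt (∫ z : Circle, hsNorm (M z - M' z) ^ 2 ∂μ) +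
  |Real.log ‖(mFourierCoeff (blockA M) 0).det‖ -
    Real.log ‖(mFourierCoeff (blockA M') 0).det‖|

/-- Membership in the space `𝐋_α`. -/
def MemL {n : ℕ} (α : Fin 2 → Fin 2) (M : Circle → Mat2 n) : Prop :=
  (∀ᵐ z ∂μ, IsSU (M z)) ∧
  MemL2 (blockA M) ∧ MemL2 (blockB M) ∧ MemL2 (blockC M) ∧ MemL2 (blockD M) ∧
  (∀ k : ℤ, 0 < k → mFourierCoeff (blockA M) k = 0) ∧
  (∀ k : ℤ, k < 0 → mFourierCoeff (blockD M) k = 0) ∧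
  Triangular (α 0) (mFourierCoeff (blockA M) 0) ∧
  Triangular (α 1) (mFourierCoeff (blockD M) 0)

/-- Properties (i) and (ii) in the definition of `𝐇_α⁺`. -/
def Hp12 {n : ℕ} (α : Fin 2 → Fin 2) (M : Circle → Mat2 n) : Prop :=
  InH2 (cT (blockA M)) ∧ InH2 (cT (blockC M)) ∧ InH2 (blockB M) ∧ InH2 (blockD M) ∧
  Triangular (α 0) (mFourierCoeff (blockA M) 0) ∧
  Triangular (α 1) (mFourierCoeff (blockD M) 0)

/-- Membership in the space `𝐇_α⁺`. -/
def MemHplus {n : ℕ} (α : Fin 2 → Fin 2) (M : Circle → Mat2 n) : Prop :=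
  (∀ᵐ z ∂μ, IsSU (M z)) ∧ Hp12 α M ∧
  ∀ (M' : Circle → Mat2 n) (I₁ I₂ : Circle → Mat n),
    (∀ᵐ z ∂μ, IsSU (M' z)) → Hp12 α M' →
    (∀ᵐ z ∂μ, IsUnitary (I₁ z)) → (∀ᵐ z ∂μ, IsUnitary (I₂ z)) →
    InH2 (cT I₁) → InH2 I₂ →
    (∀ᵐ z ∂μ, M z = M' z * Matrix.fromBlocks (I₁ z) 0 0 (I₂ z)) →
    (∀ᵐ z ∂μ, I₁ z = 1) ∧ (∀ᵐ z ∂μ, I₂ z = 1)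

/-- Membership in the space `𝐔_α⁺`: as `𝐇_α⁺` but with `U(2n)` in place of `SU(2n)`. -/
def MemUplus {n : ℕ} (α : Fin 2 → Fin 2) (M : Circle → Mat2 n) : Prop :=
  (∀ᵐ z ∂μ, IsUnitary (M z)) ∧ Hp12 α M ∧
  ∀ (M' : Circle → Mat2 n) (I₁ I₂ : Circle → Mat n),
    (∀ᵐ z ∂μ, IsUnitary (M' z)) → Hp12 α M' →
    (∀ᵐ z ∂μ, IsUnitary (I₁ z)) → (∀ᵐ z ∂μ, IsUnitary (I₂ z)) →
    InH2 (cT I₁) → InH2 I₂ →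
    (∀ᵐ z ∂μ, M z = M' z * Matrix.fromBlocks (I₁ z) 0 0 (I₂ z)) →
    (∀ᵐ z ∂μ, I₁ z = 1) ∧ (∀ᵐ z ∂μ, I₂ z = 1)

/-- Properties (i) and (ii) in the definition of `𝐇⁻_{α,0}`. -/
def Hm12 {n : ℕ} (α : Fin 2 → Fin 2) (M : Circle → Mat2 n) : Prop :=
  InH2 (cT (blockA M)) ∧ InH2 (blockD M) ∧
  MemL2 (blockB M) ∧ (∀ k : ℤ, 0 ≤ k → mFourierCoeff (blockB M) k = 0) ∧
  MemL2 (blockC M) ∧ (∀ k : ℤ, k ≤ 0 → mFourierCoeff (blockC M) k = 0) ∧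
  Triangular (α 0) (mFourierCoeff (blockA M) 0) ∧
  Triangular (α 1) (mFourierCoeff (blockD M) 0)

/-- Membership in the space `𝐇⁻_{α,0}`. -/
def MemHminus {n : ℕ} (α : Fin 2 → Fin 2) (M : Circle → Mat2 n) : Prop :=
  (∀ᵐ z ∂μ, IsSU (M z)) ∧ Hm12 α M ∧
  ∀ (M' : Circle → Mat2 n) (I₁ I₂ : Circle → Mat n),
    (∀ᵐ z ∂μ, IsSU (M' z)) → Hm12 α M' →
    (∀ᵐ z ∂μ, IsUnitary (I₁ z)) → (∀ᵐ z ∂μ, IsUnitary (I₂ z)) →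
    InH2 (cT I₁) → InH2 I₂ →
    (∀ᵐ z ∂μ, M z = Matrix.fromBlocks (I₁ z) 0 0 (I₂ z) * M' z) →
    (∀ᵐ z ∂μ, I₁ z = 1) ∧ (∀ᵐ z ∂μ, I₂ z = 1)

/-- Membership in `ℓ²(ℤ_{≥0}; 𝓒)`. -/
def L2Half {n : ℕ} (F : ℕ → Mat n) : Prop :=
  (∀ j, Contractive (F j)) ∧ Summable fun j => hsNorm (F j) ^ 2

/-- Membership in `ℓ²(ℤ; 𝓒)`. -/
def L2Z {n : ℕ} (F : ℤ → Mat n) : Prop :=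
  (∀ j, Contractive (F j)) ∧ Summable fun j => hsNorm (F j) ^ 2

/-- The `ℓ²` distance between two sequences. -/
def distL2Half {n : ℕ} (F F' : ℕ → Mat n) : ℝ :=
  Real.sqrt (∑' j, hsNorm (F j - F' j) ^ 2)

/-- Extension of a one-sided sequence to `ℤ` by zero. -/
def extZ {n : ℕ} (F : ℕ → Mat n) : ℤ → Mat n :=
  fun j => if 0 ≤ j then F j.toNat else 0

/-- `Φ` is a continuous extension of the NLFT `𝓕_α` to `ℓ²(ℤ_{≥0}; 𝓒)`, mapping into
`(𝐋_α, d)`. -/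
def IsNLFTExtension {n : ℕ} (α : Fin 2 → Fin 2) (Φ : (ℕ → Mat n) → Circle → Mat2 n) : Prop :=
  (∀ F : ℕ → Mat n, (∀ j, Contractive (F j)) → (Function.support F).Finite →
      ∀ᵐ z ∂μ, Φ F z = nlft α (extZ F) z) ∧
  (∀ F, L2Half F → MemL α (Φ F)) ∧
  (∀ F, L2Half F → ∀ ε : ℝ, 0 < ε → ∃ δ : ℝ, 0 < δ ∧ ∀ F', L2Half F' →
      distL2Half F F' < δ → metricD (Φ F) (Φ F') < ε)

/-- The truncation of a two-sided sequence to `[-N, N]`. -/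
def truncZ {n : ℕ} (F : ℤ → Mat n) (N : ℕ) : ℤ → Mat n :=
  fun j => if j.natAbs ≤ N then F j else 0

/-- `𝓕_α(F) = M` for a two-sided square-summable sequence `F`, formulated as convergence
in the metric `d` of the NLFTs of the truncations of `F`. -/
def NLFTeq {n : ℕ} (α : Fin 2 → Fin 2) (F : ℤ → Mat n) (M : Circle → Mat2 n) : Prop :=
  Tendsto (fun N : ℕ => metricD (nlft α (truncZ F N)) M) atTop (nhds 0)

/-- Determinant of a `2 × 2`-block unitary matrix with invertible diagonal blocks. -/
theorem statement_3 (n : ℕ) (hn : 1 ≤ n) (M : Mat2 n) (hU : IsUnitary M)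
    (hA : IsUnit M.toBlocks₁₁) (hD : IsUnit M.toBlocks₂₂) :
    M.det = M.toBlocks₂₂.det / ((M.toBlocks₁₁)ᴴ).det ∧
    M.det = M.toBlocks₁₁.det / ((M.toBlocks₂₂)ᴴ).det := by
  classical
  set A := M.toBlocks₁₁ with hAdef
  set B := M.toBlocks₁₂ with hBdef
  set C := M.toBlocks₂₁ with hCdef
  set D := M.toBlocks₂₂ with hDdef
  have hM : M = Matrix.fromBlocks A B C D := (Matrix.fromBlocks_toBlocks M).symm
  have hU' : M * Mᴴ = 1 := mul_eq_one_comm.mp hU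
  rw [hM] at hU'
  rw [Matrix.fromBlocks_conjTranspose, Matrix.fromBlocks_multiply,
    ← Matrix.fromBlocks_one] at hU'
  rw [Matrix.fromBlocks_inj] at hU'
  obtain ⟨h11, h12, h21, h22⟩ := hU'
  have hAne : Aᴴ.det ≠ 0 := by
    have : IsUnit A.det := hA.map (Matrix.detMonoidHom)
    simp [Matrix.det_conjTranspose]
    exact fun h => this.ne_zero (by simpa using congrArg star h)
  have hDne : Dᴴ.det ≠ 0 := by
    have : IsUnit D.det := hD.map (Matrix.detMonoidHom)
    simp [Matrix.det_conjTranspose]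
    exact fun h => this.ne_zero (by simpa using congrArg star h)
  have key1 : M.det * Aᴴ.det = D.det := by
    have hprod : M * Matrix.fromBlocks Aᴴ 0 Bᴴ 1 = Matrix.fromBlocks 1 B 0 D := by
      rw [hM, Matrix.fromBlocks_multiply]
      congr 1 <;> simp [mul_one, add_comm, h11, h21]
    have := congrArg Matrix.det hprod
    rw [Matrix.det_mul, Matrix.det_fromBlocks_zero₁₂, Matrix.det_fromBlocks_zero₂₁] at this
    simpa using this
  have key2 : M.det * Dᴴ.det = A.det := by
    have hprod : M * Matrix.fromBlocks 1 Cᴴ 0 Dᴴ = Matrix.fromBlocks A 0 C 1 := by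
      rw [hM, Matrix.fromBlocks_multiply]
      congr 1 <;> simp [mul_one, h12, h22]
    have := congrArg Matrix.det hprod
    rw [Matrix.det_mul, Matrix.det_fromBlocks_zero₂₁, Matrix.det_fromBlocks_zero₁₂] at this
    simpa using this
  constructor
  · rw [eq_div_iff hAne]; exact key1
  · rw [eq_div_iff hDne]; exact key2


end NLFT
end
end

section
/- Let I : 𝕋 → 𝓜 be measurable with I(z) unitary for a.e. z ∈ 𝕋 and with I ∈ H²(𝔻) (all Fourier coefficients of negative index vanish). If the scalar function z ↦ det I(z) is a.e. equal to a constant on 𝕋, then I is a.e. equal to a constant unitary matrix on 𝕋. (This is the boundary-value formulation of the statement that an inner matrix-valued function with constant determinant is constant.) -/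
open MeasureTheory Matrix Filter
open scoped Real ENNReal Topology ComplexOrder

noncomputable section

namespace NLFT

section Statement4Aux

open Complex

instance fact_two_pi : Fact (0 < 2 * Real.pi) := ⟨Real.two_pi_pos⟩

lemma μ_eq_map :
    μ = Measure.map AddCircle.toCircle (AddCircle.haarAddCircle (T := 2 * Real.pi)) := rfl

lemma measurable_toCircle2 : Measurable (AddCircle.toCircle (T := 2 * Real.pi)) :=
  AddCircle.continuous_toCircle.measurable

lemma mp_toCircle :
    MeasurePreserving (AddCircle.toCircle (T := 2 * Real.pi)) AddCircle.haarAddCircle μ :=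
  ⟨measurable_toCircle2, rfl⟩

instance : IsProbabilityMeasure μ := by
  rw [μ_eq_map]
  exact Measure.isProbabilityMeasure_map measurable_toCircle2.aemeasurable

instance : (MeasureTheory.ae μ).NeBot := by
  refine ae_neBot.2 fun h => ?_
  have h1 : μ Set.univ = 1 := measure_univ
  rw [h] at h1
  simp at h1

lemma continuous_coe_circle : Continuous ((↑) : Circle → ℂ) := continuous_subtype_val

lemma norm_coe_circle (z : Circle) : ‖(z : ℂ)‖ = 1 := by
  rw [Circle.norm_coe]

lemma norm_zpow_circle (z : Circle) (m : ℤ) : ‖(z : ℂ) ^ m‖ = 1 := by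
  rw [norm_zpow, norm_coe_circle, _root_.one_zpow]

lemma continuous_zpow_circle (m : ℤ) : Continuous fun z : Circle => (z : ℂ) ^ m := by
  have h1 : Continuous fun z : Circle => z ^ m := continuous_zpow m
  have h2 : (fun z : Circle => (z : ℂ) ^ m) = fun z : Circle => ((z ^ m : Circle) : ℂ) := rfl
  rw [h2]
  exact continuous_coe_circle.comp h1

lemma aesm_zpow (m : ℤ) : AEStronglyMeasurable (fun z : Circle => (z : ℂ) ^ m) μ :=
  (continuous_zpow_circle m).aestronglyMeasurable

lemma toCircle_zsmul (t : AddCircle (2 * Real.pi)) (k : ℤ) :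
    AddCircle.toCircle (k • t) = AddCircle.toCircle t ^ k := by
  have hneg : ∀ s : AddCircle (2 * Real.pi),
      AddCircle.toCircle (-s) = (AddCircle.toCircle s)⁻¹ := by
    intro s
    refine eq_inv_of_mul_eq_one_left ?_
    rw [← AddCircle.toCircle_add, neg_add_cancel, AddCircle.toCircle_zero]
  induction k using Int.induction_on with
  | zero => rw [zero_zsmul, zpow_zero]; exact AddCircle.toCircle_zero
  | succ m ih =>
      have h1 : ((m : ℤ) + 1) • t = (m : ℤ) • t + t := by rw [add_zsmul, one_zsmul]
      rw [h1, AddCircle.toCircle_add, ih, _root_.zpow_add_one]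
  | pred m ih =>
      have h1 : (-(m : ℤ) - 1) • t = (-(m : ℤ)) • t + -t := by
        rw [sub_zsmul, one_zsmul]
      rw [h1, AddCircle.toCircle_add, ih, hneg, _root_.zpow_sub_one]

lemma fourier_eq_zpow (m : ℤ) (t : AddCircle (2 * Real.pi)) :
    (fourier m t : ℂ) = ((AddCircle.toCircle t : ℂ)) ^ m := by
  rw [fourier_apply, toCircle_zsmul]
  rfl

lemma int_fourier_zero {m : ℤ} (hm : m ≠ 0) :
    ∫ t : AddCircle (2 * Real.pi), (fourier m t : ℂ) ∂AddCircle.haarAddCircle = 0 := by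
  exact integral_eq_zero_of_add_right_eq_neg (μ := AddCircle.haarAddCircle)
    (fourier_add_half_inv_index hm Real.two_pi_pos)

/-- The `k`-th Fourier coefficient of a scalar function on the circle. -/
def fc (f : Circle → ℂ) (k : ℤ) : ℂ := ∫ z : Circle, (z : ℂ) ^ (-k) * f z ∂μ

lemma fc_def (f : Circle → ℂ) (k : ℤ) : fc f k = ∫ z : Circle, (z : ℂ) ^ (-k) * f z ∂μ := rfl

lemma fc_congr {f g : Circle → ℂ} (h : f =ᵐ[μ] g) (k : ℤ) : fc f k = fc g k :=
  integral_congr_ae (h.mono fun z hz => by simp only [hz])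

lemma fc_eq_fourierCoeff {f : Circle → ℂ} (hf : AEStronglyMeasurable f μ) (k : ℤ) :
    fc f k = fourierCoeff (fun t : AddCircle (2 * Real.pi) => f (AddCircle.toCircle t)) k := by
  have hg : AEStronglyMeasurable (fun z : Circle => (z : ℂ) ^ (-k) * f z) μ :=
    (aesm_zpow (-k)).mul hf
  have hg' : AEStronglyMeasurable (fun z : Circle => (z : ℂ) ^ (-k) * f z)
      (Measure.map AddCircle.toCircle (AddCircle.haarAddCircle (T := 2 * Real.pi))) :=
    μ_eq_map ▸ hg
  rw [fc_def, μ_eq_map, integral_map measurable_toCircle2.aemeasurable hg']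
  rw [fourierCoeff]
  refine integral_congr_ae (Eventually.of_forall fun t => ?_)
  simp only [smul_eq_mul, fourier_eq_zpow]

lemma int_zpow_zero {m : ℤ} (hm : m ≠ 0) : ∫ z : Circle, (z : ℂ) ^ m ∂μ = 0 := by
  have hg' : AEStronglyMeasurable (fun z : Circle => (z : ℂ) ^ m)
      (Measure.map AddCircle.toCircle (AddCircle.haarAddCircle (T := 2 * Real.pi))) :=
    μ_eq_map ▸ aesm_zpow m
  rw [μ_eq_map, integral_map measurable_toCircle2.aemeasurable hg']
  refine Eq.trans (integral_congr_ae (Eventually.of_forall fun t => ?_)) (int_fourier_zero hm)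
  exact (fourier_eq_zpow m t).symm

lemma ae_comp_toCircle {P : Circle → Prop} (h : ∀ᵐ z ∂μ, P z) :
    ∀ᵐ t ∂(AddCircle.haarAddCircle (T := 2 * Real.pi)), P (AddCircle.toCircle t) :=
  ae_of_ae_map measurable_toCircle2.aemeasurable (μ_eq_map ▸ h)

lemma fourierCoeff_congr_ae {F G : AddCircle (2 * Real.pi) → ℂ}
    (h : F =ᵐ[AddCircle.haarAddCircle] G) (i : ℤ) : fourierCoeff F i = fourierCoeff G i :=
  integral_congr_ae (h.mono fun t ht => by simp only [ht])

/-- Bounded measurable functions on the circle with vanishing negatively-indexed Fourier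
coefficients. -/
structure Hp (f : Circle → ℂ) : Prop where
  meas : AEStronglyMeasurable f μ
  bdd : ∃ C : ℝ, ∀ᵐ z ∂μ, ‖f z‖ ≤ C
  coeff : ∀ k : ℤ, k < 0 → fc f k = 0

lemma Hp.memL2 {f : Circle → ℂ} (hf : Hp f) : MemLp f 2 μ := by
  obtain ⟨C, hC⟩ := hf.bdd
  exact (memLp_top_of_bound hf.meas C hC).mono_exponent le_top

lemma integrable_mono_mul {f : Circle → ℂ} (hf : AEStronglyMeasurable f μ) {C : ℝ}
    (hC : ∀ᵐ z ∂μ, ‖f z‖ ≤ C) (k : ℤ) :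
    Integrable (fun z : Circle => (z : ℂ) ^ k * f z) μ := by
  have hm : AEStronglyMeasurable (fun z : Circle => (z : ℂ) ^ k * f z) μ :=
    (aesm_zpow k).mul hf
  refine (memLp_top_of_bound hm C ?_).integrable le_top
  filter_upwards [hC] with z hz
  rw [norm_mul, norm_zpow_circle, one_mul]
  exact hz

lemma Hp.const (a : ℂ) : Hp (fun _ : Circle => a) := by
  refine ⟨aestronglyMeasurable_const, ⟨‖a‖, Eventually.of_forall fun _ => le_rfl⟩, fun k hk => ?_⟩
  have h1 : fc (fun _ : Circle => a) k = (∫ z : Circle, (z : ℂ) ^ (-k) ∂μ) * a := by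
    rw [fc_def, ← integral_mul_const]
  rw [h1, int_zpow_zero (by omega), zero_mul]

lemma Hp.congr {f g : Circle → ℂ} (hf : Hp f) (h : f =ᵐ[μ] g) : Hp g := by
  obtain ⟨C, hC⟩ := hf.bdd
  refine ⟨hf.meas.congr h, ⟨C, ?_⟩, fun k hk => ?_⟩
  · filter_upwards [hC, h] with z h1 h2
    rw [← h2]; exact h1
  · rw [← fc_congr h k]; exact hf.coeff k hk

lemma Hp.add {f g : Circle → ℂ} (hf : Hp f) (hg : Hp g) : Hp fun z => f z + g z := by
  obtain ⟨Cf, hCf⟩ := hf.bdd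
  obtain ⟨Cg, hCg⟩ := hg.bdd
  refine ⟨hf.meas.add hg.meas, ⟨Cf + Cg, ?_⟩, fun k hk => ?_⟩
  · filter_upwards [hCf, hCg] with z h1 h2
    exact (norm_add_le _ _).trans (add_le_add h1 h2)
  · have h1 := integrable_mono_mul hf.meas hCf (-k)
    have h2 := integrable_mono_mul hg.meas hCg (-k)
    have h3 : fc (fun z => f z + g z) k = fc f k + fc g k := by
      rw [fc_def, fc_def, fc_def, ← integral_add h1 h2]
      exact integral_congr_ae (Eventually.of_forall fun z => by ring)
    rw [h3, hf.coeff k hk, hg.coeff k hk, add_zero]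

lemma Hp.mul {f g : Circle → ℂ} (hf : Hp f) (hg : Hp g) : Hp fun z => f z * g z := by
  obtain ⟨Cf, hCf⟩ := hf.bdd
  obtain ⟨Cg, hCg⟩ := hg.bdd
  refine ⟨hf.meas.mul hg.meas, ⟨Cf * Cg, ?_⟩, ?_⟩
  · filter_upwards [hCf, hCg] with z h1 h2
    rw [norm_mul]
    exact mul_le_mul h1 h2 (norm_nonneg _) ((norm_nonneg _).trans h1)
  intro k hk
  have hF2 : MemLp (fun t => f (AddCircle.toCircle t)) 2
      (AddCircle.haarAddCircle (T := 2 * Real.pi)) :=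
    hf.memL2.comp_measurePreserving mp_toCircle
  have hGm : AEStronglyMeasurable (fun t => g (AddCircle.toCircle t))
      (AddCircle.haarAddCircle (T := 2 * Real.pi)) :=
    hg.meas.comp_measurePreserving mp_toCircle
  set u : AddCircle (2 * Real.pi) → ℂ :=
    fun t => (starRingEnd ℂ) ((fourier (-k) t) * g (AddCircle.toCircle t)) with hudef
  have hum : AEStronglyMeasurable u AddCircle.haarAddCircle :=
    Complex.continuous_conj.comp_aestronglyMeasurable
      (((fourier (-k)).continuous.aestronglyMeasurable).mul hGm)
  have hu2 : MemLp u 2 AddCircle.haarAddCircle := by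
    refine (memLp_top_of_bound hum Cg ?_).mono_exponent le_top
    filter_upwards [ae_comp_toCircle hCg] with t ht
    calc ‖u t‖ = ‖(fourier (-k) t : ℂ) * g (AddCircle.toCircle t)‖ := by
          rw [hudef, RCLike.norm_conj]
    _ = ‖(fourier (-k) t : ℂ)‖ * ‖g (AddCircle.toCircle t)‖ := norm_mul _ _
    _ ≤ Cg := by rw [fourier_eq_zpow, norm_zpow_circle, one_mul]; exact ht
  set Fl := hF2.toLp _ with hFldef
  set ul := hu2.toLp _ with huldef
  have claim1 : (inner ℂ ul Fl : ℂ) =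
      fourierCoeff (fun t : AddCircle (2 * Real.pi) => f (AddCircle.toCircle t) * g (AddCircle.toCircle t)) k := by
    rw [MeasureTheory.L2.inner_def, fourierCoeff]
    refine integral_congr_ae ?_
    filter_upwards [hu2.coeFn_toLp, hF2.coeFn_toLp] with t h1 h2
    simp only [RCLike.inner_apply]
    rw [h1, h2, hudef]
    simp only [RCLike.conj_conj, smul_eq_mul]
    ring
  have hsum := ((fourierBasis (T := 2 * Real.pi)).hasSum_repr Fl).mapL (innerSL ℂ ul)
  have hzero : ∀ i : ℤ, (innerSL ℂ ul)
      ((fourierBasis (T := 2 * Real.pi)).repr Fl i • (fourierBasis (T := 2 * Real.pi)) i)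
      = 0 := by
    intro i
    rw [_root_.map_smul, smul_eq_mul]
    rcases lt_or_ge i 0 with hi | hi
    · have h0 : (fourierBasis (T := 2 * Real.pi)).repr Fl i = 0 := by
        rw [fourierBasis_repr, fourierCoeff_congr_ae hF2.coeFn_toLp,
          ← fc_eq_fourierCoeff hf.meas]
        exact hf.coeff i hi
      rw [h0, zero_mul]
    · have h0 : (innerSL ℂ ul) ((fourierBasis (T := 2 * Real.pi)) i) = 0 := by
        rw [innerSL_apply_apply]
        have hbe : ((fourierBasis (T := 2 * Real.pi)) i) = fourierLp 2 i := by
          rw [coe_fourierBasis]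
        rw [hbe, MeasureTheory.L2.inner_def]
        have h2 : (∫ t, (inner ℂ (ul t) ((fourierLp 2 i : Lp ℂ 2
            (AddCircle.haarAddCircle (T := 2 * Real.pi))) t) : ℂ) ∂AddCircle.haarAddCircle)
            = fourierCoeff (fun t : AddCircle (2 * Real.pi) => g (AddCircle.toCircle t)) (k - i) := by
          rw [fourierCoeff]
          refine integral_congr_ae ?_
          filter_upwards [hu2.coeFn_toLp, coeFn_fourierLp 2 i] with t h1 h2
          simp only [RCLike.inner_apply]
          rw [h1, h2, hudef]
          simp only [RCLike.conj_conj]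
          have h3 : -(k - i) = -k + i := by ring
          rw [h3, fourier_add, smul_eq_mul]
          ring
        rw [h2, ← fc_eq_fourierCoeff hg.meas (k - i)]
        exact hg.coeff _ (by omega)
      rw [h0, mul_zero]
  have hIP : (inner ℂ ul Fl : ℂ) = 0 := by
    have h1 := hsum
    simp only [hzero] at h1
    have h4 := h1.unique hasSum_zero
    rwa [innerSL_apply_apply] at h4
  have h2 : fourierCoeff (fun t : AddCircle (2 * Real.pi) => f (AddCircle.toCircle t) * g (AddCircle.toCircle t)) k = 0 := by
    rw [← claim1, hIP]
  rw [fc_eq_fourierCoeff (f := fun z => f z * g z) (hf.meas.mul hg.meas) k]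
  exact h2

lemma Hp.fsum {ι : Type*} (s : Finset ι) (f : ι → Circle → ℂ) (h : ∀ a ∈ s, Hp (f a)) :
    Hp fun z => ∑ a ∈ s, f a z := by
  classical
  induction s using Finset.induction_on with
  | empty => simpa using Hp.const 0
  | @insert a s ha ih =>
      have h1 : Hp fun z => f a z + ∑ b ∈ s, f b z :=
        (h a (Finset.mem_insert_self a s)).add
          (ih fun b hb => h b (Finset.mem_insert_of_mem hb))
      refine h1.congr (Eventually.of_forall fun z => ?_)
      simp [Finset.sum_insert ha]

lemma Hp.fprod {ι : Type*} (s : Finset ι) (f : ι → Circle → ℂ) (h : ∀ a ∈ s, Hp (f a)) :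
    Hp fun z => ∏ a ∈ s, f a z := by
  classical
  induction s using Finset.induction_on with
  | empty => simpa using Hp.const 1
  | @insert a s ha ih =>
      have h1 : Hp fun z => f a z * ∏ b ∈ s, f b z :=
        (h a (Finset.mem_insert_self a s)).mul
          (ih fun b hb => h b (Finset.mem_insert_of_mem hb))
      refine h1.congr (Eventually.of_forall fun z => ?_)
      simp [Finset.prod_insert ha]

lemma Hp.det {m : ℕ} (M : Circle → Matrix (Fin m) (Fin m) ℂ)
    (h : ∀ i j, Hp fun z => M z i j) : Hp fun z => (M z).det := by
  classical
  have h1 : (fun z => (M z).det) = fun z => ∑ σ : Equiv.Perm (Fin m),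
      ((Equiv.Perm.sign σ : ℤ) : ℂ) * ∏ i, M z (σ i) i := by
    funext z
    rw [Matrix.det_apply]
    refine Finset.sum_congr rfl fun σ _ => ?_
    rw [Units.smul_def, zsmul_eq_mul]
  rw [h1]
  exact Hp.fsum Finset.univ _ fun σ _ =>
    (Hp.const _).mul (Hp.fprod Finset.univ _ fun i _ => h (σ i) i)

lemma eq_const_of_fc {f : Circle → ℂ} (hm : MemLp f 2 μ) (h : ∀ k : ℤ, k ≠ 0 → fc f k = 0) :
    ∀ᵐ z ∂μ, f z = fc f 0 := by
  set a : ℂ := fc f 0 with hadef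
  have hF2 : MemLp (fun t => f (AddCircle.toCircle t)) 2
      (AddCircle.haarAddCircle (T := 2 * Real.pi)) :=
    hm.comp_measurePreserving mp_toCircle
  have hc2 : MemLp (fun _ : AddCircle (2 * Real.pi) => a) 2 AddCircle.haarAddCircle :=
    memLp_const a
  have hcoeff : ∀ i : ℤ, fourierCoeff (fun _ : AddCircle (2 * Real.pi) => a) i
      = if i = 0 then a else 0 := by
    intro i
    rcases eq_or_ne i 0 with rfl | hi
    · rw [if_pos rfl, fourierCoeff]
      simp only [neg_zero, fourier_zero, one_smul]
      simp [measure_univ]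
    · rw [if_neg hi, fourierCoeff]
      rw [integral_smul_const, int_fourier_zero (by omega), zero_smul]
  have key : hF2.toLp _ = hc2.toLp _ := by
    apply (fourierBasis (T := 2 * Real.pi)).repr.injective
    apply lp.ext
    funext i
    rw [fourierBasis_repr, fourierBasis_repr,
      fourierCoeff_congr_ae hF2.coeFn_toLp, fourierCoeff_congr_ae hc2.coeFn_toLp,
      ← fc_eq_fourierCoeff hm.aestronglyMeasurable, hcoeff i]
    rcases eq_or_ne i 0 with rfl | hi
    · rw [if_pos rfl, hadef]
    · rw [if_neg hi, h i hi]
  have hFc : (fun t => f (AddCircle.toCircle t))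
      =ᵐ[AddCircle.haarAddCircle (T := 2 * Real.pi)] fun _ => a := by
    refine (hF2.coeFn_toLp.symm).trans ?_
    rw [key]
    exact hc2.coeFn_toLp
  obtain ⟨hsm⟩ := And.intro hm.aestronglyMeasurable trivial
  set f' : Circle → ℂ := hsm.mk f with hf'def
  have hff' : f =ᵐ[μ] f' := hsm.ae_eq_mk
  have h1 : ∀ᵐ t ∂(AddCircle.haarAddCircle (T := 2 * Real.pi)),
      f' (AddCircle.toCircle t) = a := by
    filter_upwards [ae_comp_toCircle hff', hFc] with t h2 h3
    rw [← h2]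
    exact h3
  have hset : MeasurableSet {z : Circle | f' z = a} :=
    hsm.stronglyMeasurable_mk.measurable (measurableSet_singleton a)
  have h2 : ∀ᵐ z ∂μ, f' z = a := by
    rw [μ_eq_map, ae_map_iff measurable_toCircle2.aemeasurable hset]
    exact h1
  filter_upwards [hff', h2] with z hz1 hz2
  rw [hz1, hz2]

end Statement4Aux

/-- An inner matrix function (boundary-value formulation) with a.e. constant determinant
is a.e. equal to a constant unitary matrix. -/
theorem statement_4 (n : ℕ) (hn : 1 ≤ n) (I : Circle → Mat n)
    (h2 : InH2 I) (hu : ∀ᵐ z ∂μ, IsUnitary (I z))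
    (c : ℂ) (hc : ∀ᵐ z ∂μ, (I z).det = c) :
    ∃ U : Mat n, IsUnitary U ∧ ∀ᵐ z ∂μ, I z = U := by
  classical
  -- entries are bounded by 1 a.e.
  have hbd : ∀ᵐ z ∂μ, ∀ i j, ‖I z i j‖ ≤ 1 := by
    filter_upwards [hu] with z hz i j
    have h1 : ((I z)ᴴ * I z) j j = 1 := by rw [hz]; simp [Matrix.one_apply]
    rw [Matrix.mul_apply] at h1
    have h2' : ∀ k, ((I z)ᴴ j k * I z k j) = ((‖I z k j‖ : ℂ)) ^ 2 := fun k => by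
      rw [Matrix.conjTranspose_apply]
      exact RCLike.conj_mul (I z k j)
    rw [Finset.sum_congr rfl fun k _ => h2' k] at h1
    have h3 : ∑ k, (‖I z k j‖ : ℝ) ^ 2 = 1 := by
      exact_mod_cast h1
    have h4 : (‖I z i j‖ : ℝ) ^ 2 ≤ 1 := by
      rw [← h3]
      exact Finset.single_le_sum (f := fun k => (‖I z k j‖ : ℝ) ^ 2)
        (fun k _ => sq_nonneg _) (Finset.mem_univ i)
    nlinarith [norm_nonneg (I z i j)]
  have hpE : ∀ i j, Hp fun z => I z i j := by
    intro i j
    refine ⟨(h2.1 i j).aestronglyMeasurable, ⟨1, hbd.mono fun z h => h i j⟩, fun k hk => ?_⟩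
    have h1 := congrArg (fun M : Mat n => M i j) (h2.2 k hk)
    simpa [mFourierCoeff, fc_def] using h1
  -- c is nonzero
  obtain ⟨z₀, hz₀u, hz₀c⟩ := (hu.and hc).exists
  have hcc : star c * c = 1 := by
    have h1 := congrArg Matrix.det hz₀u
    rw [Matrix.det_mul, Matrix.det_conjTranspose, Matrix.det_one, hz₀c] at h1
    exact h1
  have hcne : c ≠ 0 := right_ne_zero_of_mul_eq_one hcc
  -- adjugate entries are Hp
  have hpAdj : ∀ i j, Hp fun z => (I z).adjugate i j := by
    intro i j
    have hrw : (fun z => (I z).adjugate i j)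
        = fun z => ((I z).updateRow j (Pi.single i 1)).det := by
      funext z; rw [Matrix.adjugate_apply]
    rw [hrw]
    refine Hp.det _ fun a b => ?_
    by_cases hab : a = j
    · simp only [Matrix.updateRow_apply, hab, if_pos rfl]
      exact Hp.const _
    · simp only [Matrix.updateRow_apply, if_neg hab]
      exact hpE a b
  -- conjugates of entries are Hp
  have hadj : ∀ᵐ z ∂μ, ∀ i j, (starRingEnd ℂ) (I z j i) = c⁻¹ * (I z).adjugate i j := by
    filter_upwards [hu, hc] with z hz hdet i j
    have h1 : (I z) * (I z).adjugate = c • 1 := by rw [Matrix.mul_adjugate, hdet]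
    have h3 : (I z).adjugate = c • (I z)ᴴ := by
      have h2' : (I z)ᴴ * ((I z) * (I z).adjugate) = (I z)ᴴ * (c • 1) := by rw [h1]
      rw [← Matrix.mul_assoc, hz, Matrix.one_mul] at h2'
      rw [h2', Matrix.mul_smul, Matrix.mul_one]
    have h4 := congrArg (fun M : Mat n => M i j) h3
    simp only [Matrix.smul_apply, Matrix.conjTranspose_apply, smul_eq_mul] at h4
    rw [h4, ← mul_assoc, inv_mul_cancel₀ hcne, one_mul]
    rfl
  have hpConj : ∀ i j, Hp fun z => (starRingEnd ℂ) (I z j i) := by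
    intro i j
    refine ((Hp.const c⁻¹).mul (hpAdj i j)).congr ?_
    filter_upwards [hadj] with z hz
    exact (hz i j).symm
  -- conjugation relation for coefficients
  have hfc_conj : ∀ (f : Circle → ℂ) (m : ℤ),
      fc (fun z => (starRingEnd ℂ) (f z)) m = (starRingEnd ℂ) (fc f (-m)) := by
    intro f m
    rw [fc_def, fc_def, ← integral_conj]
    refine integral_congr_ae (Eventually.of_forall fun z => ?_)
    simp only [_root_.map_mul, neg_neg]
    congr 1
    rw [map_zpow₀ (starRingEnd ℂ) ((z : Circle) : ℂ) m, ← Circle.coe_inv_eq_conj,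
      Circle.coe_inv, _root_.inv_zpow, ← _root_.zpow_neg]
  -- all nonzero coefficients vanish
  have hfc : ∀ i j, ∀ k : ℤ, k ≠ 0 → fc (fun z => I z i j) k = 0 := by
    intro i j k hk
    rcases lt_or_gt_of_ne hk with hneg | hpos
    · exact (hpE i j).coeff k hneg
    · have h0 := (hpConj j i).coeff (-k) (by omega)
      rw [hfc_conj (fun z => I z i j) (-k), neg_neg] at h0
      simpa using congrArg (starRingEnd ℂ) h0
  have hconst : ∀ i j, ∀ᵐ z ∂μ, I z i j = fc (fun z => I z i j) 0 := fun i j =>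
    eq_const_of_fc (h2.1 i j) (hfc i j)
  set U : Mat n := mFourierCoeff I 0 with hUdef
  have hUij : ∀ i j, U i j = fc (fun z => I z i j) 0 := fun i j => rfl
  have hae : ∀ᵐ z ∂μ, I z = U := by
    have h1 : ∀ᵐ z ∂μ, ∀ i j, I z i j = U i j := by
      rw [ae_all_iff]
      intro i
      rw [ae_all_iff]
      intro j
      rw [hUij i j]
      exact hconst i j
    filter_upwards [h1] with z hz
    exact Matrix.ext hz
  obtain ⟨z₁, hz₁u, hz₁e⟩ := (hu.and hae).exists
  exact ⟨U, by rw [← hz₁e]; exact hz₁u, hae⟩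

end NLFT
end
end

section
/- Let a ∈ {0,1}. For every positive definite Hermitian matrix P ∈ 𝓜 there exists a unique U ∈ 𝓖_a with P = U*·U (the Cholesky factorization). Moreover, for every ε > 0 there exists a constant C depending only on ε and n such that ‖U − U'‖_∞ ≤ C·‖P − P'‖_∞ whenever P, P' ∈ 𝓜 are positive definite Hermitian with all eigenvalues in the interval [ε, ε^{−1}] and U, U' ∈ 𝓖_a are their respective Cholesky factors. -/
open MeasureTheory Matrix Filter
open scoped Real ENNReal Topology ComplexOrder

noncomputable section

namespace NLFT

section Cholesky

open Matrix
open scoped Matrix.Norms.L2Operator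

variable {N : ℕ}

private lemma opNorm_eq_norm (M : Mat N) : opNorm M = ‖M‖ := rfl

private lemma sum_norm_sq_eq (y : Fin N → ℂ) :
    ‖(WithLp.equiv 2 (Fin N → ℂ)).symm y‖ ^ 2 = ∑ i, ‖y i‖ ^ 2 := by
  rw [EuclideanSpace.norm_eq, Real.sq_sqrt (Finset.sum_nonneg fun i _ => sq_nonneg _)]
  simp

private lemma dot_self_eq (x : Fin N → ℂ) :
    star x ⬝ᵥ x = ((∑ i, ‖x i‖ ^ 2 : ℝ) : ℂ) := by
  rw [dotProduct]
  push_cast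
  refine Finset.sum_congr rfl fun i _ => ?_
  simp only [Pi.star_apply, RCLike.star_def]
  rw [mul_comm, Complex.mul_conj']

private lemma norm_mulVec_sq (U : Mat N) (x : Fin N → ℂ) :
    ‖(WithLp.equiv 2 (Fin N → ℂ)).symm (U *ᵥ x)‖ ^ 2 = (star x ⬝ᵥ ((Uᴴ * U) *ᵥ x)).re := by
  have h : star x ⬝ᵥ ((Uᴴ * U) *ᵥ x) = star (U *ᵥ x) ⬝ᵥ (U *ᵥ x) := by
    rw [← Matrix.mulVec_mulVec, Matrix.dotProduct_mulVec, Matrix.star_mulVec]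
  rw [h, dot_self_eq, sum_norm_sq_eq, Complex.ofReal_re]

private lemma quad_le_of_psd {P : Mat N} {c : ℝ}
    (h : ((c : ℂ) • (1 : Mat N) - P).PosSemidef) (x : Fin N → ℂ) :
    (star x ⬝ᵥ (P *ᵥ x)).re ≤ c * ‖(WithLp.equiv 2 (Fin N → ℂ)).symm x‖ ^ 2 := by
  have h0 := h.dotProduct_mulVec_nonneg x
  have hsplit : star x ⬝ᵥ (((c : ℂ) • (1 : Mat N) - P) *ᵥ x) =
      (c : ℂ) * ((∑ i, ‖x i‖ ^ 2 : ℝ) : ℂ) - star x ⬝ᵥ (P *ᵥ x) := by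
    rw [Matrix.sub_mulVec, dotProduct_sub, Matrix.smul_mulVec, Matrix.one_mulVec,
      dotProduct_smul, smul_eq_mul, dot_self_eq]
  rw [hsplit, Complex.le_def] at h0
  have h1 := h0.1
  simp only [Complex.zero_re, Complex.sub_re, Complex.mul_re, Complex.ofReal_re,
    Complex.ofReal_im, mul_zero, zero_mul, sub_zero] at h1
  rw [sum_norm_sq_eq]
  linarith

private lemma quad_ge_of_psd {P : Mat N} {c : ℝ}
    (h : (P - (c : ℂ) • (1 : Mat N)).PosSemidef) (x : Fin N → ℂ) :
    c * ‖(WithLp.equiv 2 (Fin N → ℂ)).symm x‖ ^ 2 ≤ (star x ⬝ᵥ (P *ᵥ x)).re := by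
  have h0 := h.dotProduct_mulVec_nonneg x
  have hsplit : star x ⬝ᵥ ((P - (c : ℂ) • (1 : Mat N)) *ᵥ x) =
      star x ⬝ᵥ (P *ᵥ x) - (c : ℂ) * ((∑ i, ‖x i‖ ^ 2 : ℝ) : ℂ) := by
    rw [Matrix.sub_mulVec, dotProduct_sub, Matrix.smul_mulVec, Matrix.one_mulVec,
      dotProduct_smul, smul_eq_mul, dot_self_eq]
  rw [hsplit, Complex.le_def] at h0
  have h1 := h0.1
  simp only [Complex.zero_re, Complex.sub_re, Complex.mul_re, Complex.ofReal_re,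
    Complex.ofReal_im, mul_zero, zero_mul, sub_zero] at h1
  rw [sum_norm_sq_eq]
  linarith

private lemma opNorm_le_bound' (M : Mat N) {c : ℝ} (hc : 0 ≤ c)
    (h : ∀ x : Fin N → ℂ, ‖(WithLp.equiv 2 (Fin N → ℂ)).symm (M *ᵥ x)‖ ≤
      c * ‖(WithLp.equiv 2 (Fin N → ℂ)).symm x‖) :
    opNorm M ≤ c := by
  refine ContinuousLinearMap.opNorm_le_bound _ hc fun x => ?_
  exact h ((WithLp.equiv 2 (Fin N → ℂ)) x)

private lemma coord_le_norm (y : Fin N → ℂ) (i : Fin N) :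
    ‖y i‖ ≤ ‖(WithLp.equiv 2 (Fin N → ℂ)).symm y‖ := by
  have h2 : ‖y i‖ ^ 2 ≤ ‖(WithLp.equiv 2 (Fin N → ℂ)).symm y‖ ^ 2 := by
    rw [sum_norm_sq_eq]
    exact Finset.single_le_sum (f := fun i => ‖y i‖ ^ 2) (fun _ _ => sq_nonneg _)
      (Finset.mem_univ i)
  have := Real.sqrt_le_sqrt h2
  rwa [Real.sqrt_sq (norm_nonneg _), Real.sqrt_sq (norm_nonneg _)] at this

private lemma mulVec_le_opNorm (M : Mat N) (x : Fin N → ℂ) :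
    ‖(WithLp.equiv 2 (Fin N → ℂ)).symm (M *ᵥ x)‖ ≤
      opNorm M * ‖(WithLp.equiv 2 (Fin N → ℂ)).symm x‖ :=
  (toEuclideanCLM (𝕜 := ℂ) M).le_opNorm ((WithLp.equiv 2 (Fin N → ℂ)).symm x)

private lemma abs_entry_le (M : Mat N) (i j : Fin N) : ‖M i j‖ ≤ opNorm M := by
  have hval : (M *ᵥ Pi.single j (1 : ℂ)) i = M i j := by
    simp [Matrix.mulVec, dotProduct, Pi.single_apply]
  have hone : ‖(WithLp.equiv 2 (Fin N → ℂ)).symm (Pi.single j (1 : ℂ))‖ = 1 := by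
    have : (WithLp.equiv 2 (Fin N → ℂ)).symm (Pi.single j (1 : ℂ)) =
        EuclideanSpace.single j (1 : ℂ) := rfl
    rw [this, EuclideanSpace.norm_single, norm_one]
  have hc := coord_le_norm (M *ᵥ Pi.single j (1 : ℂ)) i
  rw [hval] at hc
  calc ‖M i j‖ ≤ _ := hc
  _ ≤ opNorm M * ‖(WithLp.equiv 2 (Fin N → ℂ)).symm (Pi.single j (1 : ℂ))‖ :=
      mulVec_le_opNorm M _
  _ = opNorm M := by rw [hone, mul_one]

private lemma norm_le_sum_coord (y : Fin N → ℂ) :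
    ‖(WithLp.equiv 2 (Fin N → ℂ)).symm y‖ ≤ ∑ i, ‖y i‖ := by
  have h2 : ‖(WithLp.equiv 2 (Fin N → ℂ)).symm y‖ ^ 2 ≤ (∑ i, ‖y i‖) ^ 2 := by
    rw [sum_norm_sq_eq]
    exact Finset.sum_sq_le_sq_sum_of_nonneg fun i _ => norm_nonneg _
  have := Real.sqrt_le_sqrt h2
  rwa [Real.sqrt_sq (norm_nonneg _),
    Real.sqrt_sq (Finset.sum_nonneg fun i _ => norm_nonneg _)] at this

private lemma opNorm_le_sum_abs (M : Mat N) : opNorm M ≤ ∑ i, ∑ j, ‖M i j‖ := by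
  refine opNorm_le_bound' M (Finset.sum_nonneg fun i _ => Finset.sum_nonneg
    fun j _ => norm_nonneg _) fun x => ?_
  calc ‖(WithLp.equiv 2 (Fin N → ℂ)).symm (M *ᵥ x)‖ ≤ ∑ i, ‖(M *ᵥ x) i‖ :=
        norm_le_sum_coord _
  _ ≤ ∑ i, ∑ j, ‖M i j‖ * ‖(WithLp.equiv 2 (Fin N → ℂ)).symm x‖ := by
      refine Finset.sum_le_sum fun i _ => ?_
      calc ‖(M *ᵥ x) i‖ = ‖∑ j, M i j * x j‖ := rfl
      _ ≤ ∑ j, ‖M i j * x j‖ := norm_sum_le _ _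
      _ ≤ ∑ j, ‖M i j‖ * ‖(WithLp.equiv 2 (Fin N → ℂ)).symm x‖ := by
          refine Finset.sum_le_sum fun j _ => ?_
          rw [norm_mul]
          exact mul_le_mul_of_nonneg_left (coord_le_norm x j) (norm_nonneg _)
  _ = (∑ i, ∑ j, ‖M i j‖) * ‖(WithLp.equiv 2 (Fin N → ℂ)).symm x‖ := by
      rw [Finset.sum_mul]
      exact Finset.sum_congr rfl fun i _ => (Finset.sum_mul _ _ _).symm

private lemma isUnit_det_of_cholesky {U P : Mat N} (hP : P.PosDef) (h : Uᴴ * U = P) :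
    IsUnit U.det := by
  rw [isUnit_iff_ne_zero]
  intro h0
  have : P.det = 0 := by rw [← h, Matrix.det_mul, h0, mul_zero]
  exact hP.det_pos.ne' this

private lemma opNorm_le_sqrt {U P : Mat N} {ε : ℝ} (hε : 0 < ε) (hUP : Uᴴ * U = P)
    (h : (((ε⁻¹ : ℝ) : ℂ) • (1 : Mat N) - P).PosSemidef) :
    opNorm U ≤ Real.sqrt ε⁻¹ := by
  refine opNorm_le_bound' U (Real.sqrt_nonneg _) fun x => ?_
  have h1 : ‖(WithLp.equiv 2 (Fin N → ℂ)).symm (U *ᵥ x)‖ ^ 2 ≤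
      ε⁻¹ * ‖(WithLp.equiv 2 (Fin N → ℂ)).symm x‖ ^ 2 := by
    rw [norm_mulVec_sq, hUP]
    exact quad_le_of_psd h x
  have := Real.sqrt_le_sqrt h1
  rwa [Real.sqrt_sq (norm_nonneg _), Real.sqrt_mul (by positivity), Real.sqrt_sq
    (norm_nonneg _)] at this

private lemma opNorm_inv_le_sqrt {U P : Mat N} {ε : ℝ} (hε : 0 < ε) (hUP : Uᴴ * U = P)
    (hdet : IsUnit U.det) (h : (P - ((ε : ℝ) : ℂ) • (1 : Mat N)).PosSemidef) :
    opNorm U⁻¹ ≤ Real.sqrt ε⁻¹ := by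
  refine opNorm_le_bound' U⁻¹ (Real.sqrt_nonneg _) fun w => ?_
  have hUx : U *ᵥ (U⁻¹ *ᵥ w) = w := by
    rw [Matrix.mulVec_mulVec, Matrix.mul_nonsing_inv _ hdet, Matrix.one_mulVec]
  have h1 : ε * ‖(WithLp.equiv 2 (Fin N → ℂ)).symm (U⁻¹ *ᵥ w)‖ ^ 2 ≤
      ‖(WithLp.equiv 2 (Fin N → ℂ)).symm w‖ ^ 2 := by
    have hq := quad_ge_of_psd h (U⁻¹ *ᵥ w)
    rw [← hUP, ← norm_mulVec_sq, hUx] at hq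
    exact hq
  have h2 : ‖(WithLp.equiv 2 (Fin N → ℂ)).symm (U⁻¹ *ᵥ w)‖ ^ 2 ≤
      ε⁻¹ * ‖(WithLp.equiv 2 (Fin N → ℂ)).symm w‖ ^ 2 := by
    have h3 := mul_le_mul_of_nonneg_left h1 (by positivity : (0 : ℝ) ≤ ε⁻¹)
    rwa [← mul_assoc, inv_mul_cancel₀ hε.ne', one_mul] at h3
  have := Real.sqrt_le_sqrt h2
  rwa [Real.sqrt_sq (norm_nonneg _), Real.sqrt_mul (by positivity), Real.sqrt_sq
    (norm_nonneg _)] at this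

/-- The ordering map: identity for `a = 0` (upper triangular), reversal for `a = 1`. -/
private def bmap (a : Fin 2) : Fin N → Fin N := if a = 0 then id else Fin.rev

private lemma bmap_injective (a : Fin 2) : Function.Injective (bmap (N := N) a) := by
  unfold bmap; split
  · exact fun _ _ h => h
  · exact Fin.rev_injective

private lemma triangular_blockTriangular {a : Fin 2} {M : Mat N} (h : Triangular a M) :
    M.BlockTriangular (bmap a) := by
  intro i j hij
  apply h.1 i j
  by_cases ha : a = 0
  · simp only [bmap, ha, if_true, id] at hij ⊢
    simpa using hij
  · simp only [bmap, ha, if_false, id] at hij ⊢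
    simpa [Fin.rev_lt_rev] using hij

private lemma blockTriangular_mul_diag {b : Fin N → Fin N} (hb : Function.Injective b)
    {M P : Mat N} (hM : M.BlockTriangular b) (hP : P.BlockTriangular b) (i : Fin N) :
    (M * P) i i = M i i * P i i := by
  rw [Matrix.mul_apply]
  refine Finset.sum_eq_single_of_mem i (Finset.mem_univ i) fun k _ hk => ?_
  rcases (hb.ne hk : b k ≠ b i).lt_or_gt with h | h
  · rw [hM h, zero_mul]
  · rw [hP h, mul_zero]

private lemma blockTriangular_inv_diag {b : Fin N → Fin N} (hb : Function.Injective b)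
    {M : Mat N} (hM : M.BlockTriangular b) (hdet : IsUnit M.det) (i : Fin N) :
    M⁻¹ i i * M i i = 1 := by
  haveI := M.invertibleOfIsUnitDet hdet
  have hinv := Matrix.blockTriangular_inv_of_blockTriangular hM
  have h := blockTriangular_mul_diag hb hinv hM i
  rw [Matrix.nonsing_inv_mul M hdet] at h
  simpa using h.symm

private lemma real_chol_ineq {x y : ℝ} (hx : 0 < x) (hy : 0 < y) :
    |y / x - 1| ≤ |y / x - x / y| := by
  have key : y / x - x / y = (y / x - 1) * (1 + x / y) := by field_simp; ring
  rw [key, abs_mul, abs_of_pos (by positivity : (0 : ℝ) < 1 + x / y)]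
  exact le_mul_of_one_le_right (abs_nonneg _) (by nlinarith [div_pos hx hy])

private lemma core_bound {a : Fin 2} {U U' : Mat N} (hU : Triangular a U)
    (hU' : Triangular a U') (hdU : IsUnit U.det) (hdU' : IsUnit U'.det) (i j : Fin N) :
    ‖(U' * U⁻¹ - 1) i j‖ ≤ ‖((U'ᴴ)⁻¹ * (U'ᴴ * U' - Uᴴ * U) * U⁻¹) i j‖ := by
  have hb := bmap_injective (N := N) a
  have hUt := triangular_blockTriangular hU
  have hU't := triangular_blockTriangular hU'
  haveI := U.invertibleOfIsUnitDet hdU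
  haveI := U'.invertibleOfIsUnitDet hdU'
  have hUinv : (U⁻¹).BlockTriangular (bmap a) :=
    Matrix.blockTriangular_inv_of_blockTriangular hUt
  have hU'inv : (U'⁻¹).BlockTriangular (bmap a) :=
    Matrix.blockTriangular_inv_of_blockTriangular hU't
  have hdU'H : IsUnit (U'ᴴ).det := by
    rwa [Matrix.det_conjTranspose, isUnit_star]
  have hXinv : (U' * U⁻¹)⁻¹ = U * U'⁻¹ := by
    rw [Matrix.mul_inv_rev, Matrix.nonsing_inv_nonsing_inv U hdU]
  have hXt : (U' * U⁻¹).BlockTriangular (bmap a) := hU't.mul hUinv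
  have hXinvt : ((U' * U⁻¹)⁻¹).BlockTriangular (bmap a) := by
    rw [hXinv]; exact hUt.mul hU'inv
  have hG : (U'ᴴ)⁻¹ * (U'ᴴ * U' - Uᴴ * U) * U⁻¹ = (U' * U⁻¹) - ((U' * U⁻¹)⁻¹)ᴴ := by
    rw [Matrix.mul_sub, Matrix.sub_mul]
    congr 1
    · simp only [← Matrix.mul_assoc]
      rw [Matrix.nonsing_inv_mul _ hdU'H, Matrix.one_mul]
    · rw [hXinv, Matrix.conjTranspose_mul, Matrix.conjTranspose_nonsing_inv]
      simp only [Matrix.mul_assoc]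
      rw [Matrix.mul_nonsing_inv _ hdU, Matrix.mul_one]
  rw [hG]
  rcases lt_trichotomy (bmap a j) (bmap a i) with h | h | h
  · have hij : i ≠ j := by rintro rfl; exact lt_irrefl _ h
    rw [Matrix.sub_apply, hXt h, Matrix.one_apply_ne hij, sub_zero, norm_zero]
    exact norm_nonneg _
  · have hij : j = i := hb h
    subst hij
    rw [Matrix.sub_apply, Matrix.sub_apply, Matrix.one_apply_eq, Matrix.conjTranspose_apply]
    have hXd : (U' * U⁻¹) j j = U' j j * U⁻¹ j j := blockTriangular_mul_diag hb hU't hUinv j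
    have hXinvd : (U' * U⁻¹)⁻¹ j j = U j j * U'⁻¹ j j := by
      rw [hXinv]; exact blockTriangular_mul_diag hb hUt hU'inv j
    have hUd : U⁻¹ j j = (U j j)⁻¹ :=
      eq_inv_of_mul_eq_one_left (blockTriangular_inv_diag hb hUt hdU j)
    have hU'd : U'⁻¹ j j = (U' j j)⁻¹ :=
      eq_inv_of_mul_eq_one_left (blockTriangular_inv_diag hb hU't hdU' j)
    rw [hXd, hXinvd, hUd, hU'd]
    obtain ⟨hure, huim⟩ := hU.2 j
    obtain ⟨hu're, hu'im⟩ := hU'.2 j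
    have hu : U j j = ((U j j).re : ℂ) := Complex.ext rfl (by simp [huim])
    have hu' : U' j j = ((U' j j).re : ℂ) := Complex.ext rfl (by simp [hu'im])
    rw [hu, hu']
    set x := (U j j).re
    set y := (U' j j).re
    have e1 : (y : ℂ) * (x : ℂ)⁻¹ - 1 = ((y / x - 1 : ℝ) : ℂ) := by push_cast; ring
    have e2 : (y : ℂ) * (x : ℂ)⁻¹ - star ((x : ℂ) * (y : ℂ)⁻¹) =
        ((y / x - x / y : ℝ) : ℂ) := by
      rw [show ((x : ℂ) * (y : ℂ)⁻¹) = ((x / y : ℝ) : ℂ) by push_cast; ring,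
        RCLike.star_def, Complex.conj_ofReal]
      push_cast; ring
    rw [e1, e2, Complex.norm_real, Complex.norm_real]
    exact real_chol_ineq hure hu're
  · have hij : i ≠ j := by rintro rfl; exact lt_irrefl _ h
    have hz : ((U' * U⁻¹)⁻¹)ᴴ i j = 0 := by
      rw [Matrix.conjTranspose_apply, hXinvt h, star_zero]
    rw [Matrix.sub_apply, Matrix.sub_apply, hz, Matrix.one_apply_ne hij, sub_zero]

private lemma chol_unique {a : Fin 2} {U U' : Mat N} (hU : Triangular a U)
    (hU' : Triangular a U') (hdU : IsUnit U.det) (hdU' : IsUnit U'.det)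
    (h : U'ᴴ * U' = Uᴴ * U) : U' = U := by
  have hX : U' * U⁻¹ = 1 := by
    have h0 : ∀ i j, (U' * U⁻¹ - 1) i j = 0 := by
      intro i j
      have hb := core_bound hU hU' hdU hdU' i j
      rw [h, sub_self, Matrix.mul_zero, Matrix.zero_mul] at hb
      simp only [Matrix.zero_apply, norm_zero] at hb
      exact norm_eq_zero.mp (le_antisymm hb (norm_nonneg _))
    ext i j
    have := h0 i j
    rwa [Matrix.sub_apply, sub_eq_zero] at this
  calc U' = U' * U⁻¹ * U := by
        rw [Matrix.mul_assoc, Matrix.nonsing_inv_mul _ hdU, Matrix.mul_one]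
  _ = U := by rw [hX, Matrix.one_mul]

private lemma posDef_submatrix {P : Mat N} (hP : P.PosDef) (e : Fin N ≃ Fin N) :
    (P.submatrix e e).PosDef := by
  refine posDef_iff_dotProduct_mulVec.mpr ⟨hP.1.submatrix e, fun x hx => ?_⟩
  have hy : (x ∘ e.symm) ≠ 0 := by
    intro h
    apply hx
    funext k
    have := congrFun h (e k)
    simpa using this
  have hpos := hP.dotProduct_mulVec_pos hy
  have heq : star x ⬝ᵥ (P.submatrix e e *ᵥ x) =
      star (x ∘ e.symm) ⬝ᵥ (P *ᵥ (x ∘ e.symm)) := by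
    rw [Matrix.submatrix_mulVec_equiv, ← comp_equiv_symm_dotProduct (star x) _ e]
    rfl
  rwa [heq]

private lemma phase_fix {V : Mat N} (hVt : V.BlockTriangular id) (hdV : IsUnit V.det) :
    ∃ U : Mat N, U.BlockTriangular id ∧ (∀ i, 0 < (U i i).re ∧ (U i i).im = 0) ∧
      Uᴴ * U = Vᴴ * V := by
  have hne : ∀ i, V i i ≠ 0 := fun i =>
    right_ne_zero_of_mul_eq_one (blockTriangular_inv_diag Function.injective_id hVt hdV i)
  set φ : Fin N → ℂ := fun i => (starRingEnd ℂ) (V i i) / ((‖V i i‖ : ℝ) : ℂ)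
    with hφ
  have habs : ∀ i, (0 : ℝ) < ‖V i i‖ := fun i => norm_pos_iff.mpr (hne i)
  have hrne : ∀ i, ((‖V i i‖ : ℝ) : ℂ) ≠ 0 := fun i => by
    exact_mod_cast (habs i).ne'
  have hvc : ∀ i, V i i * (starRingEnd ℂ) (V i i) =
      ((‖V i i‖ : ℝ) : ℂ) * ((‖V i i‖ : ℝ) : ℂ) := fun i => by
    rw [Complex.mul_conj, Complex.normSq_eq_norm_sq]
    push_cast; ring
  refine ⟨Matrix.diagonal φ * V, (Matrix.blockTriangular_diagonal φ).mul hVt, fun i => ?_,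
    ?_⟩
  · have hd : (Matrix.diagonal φ * V) i i = φ i * V i i := by rw [Matrix.diagonal_mul]
    have hval : φ i * V i i = ((‖V i i‖ : ℝ) : ℂ) := by
      rw [hφ]
      rw [div_mul_eq_mul_div, mul_comm, hvc i, mul_div_assoc, div_self (hrne i), mul_one]
    rw [hd, hval]
    exact ⟨by simpa using habs i, by simp⟩
  · have hDD : (Matrix.diagonal φ)ᴴ * Matrix.diagonal φ = 1 := by
      rw [Matrix.diagonal_conjTranspose, Matrix.diagonal_mul_diagonal]
      have hφ1 : ∀ i, star φ i * φ i = 1 := by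
        intro i
        show star (φ i) * φ i = 1
        rw [hφ]
        simp only [RCLike.star_def, map_div₀, Complex.conj_conj, Complex.conj_ofReal]
        rw [div_mul_div_comm, hvc i, div_self (mul_ne_zero (hrne i) (hrne i))]
      rw [show (fun i => star φ i * φ i) = fun _ => (1 : ℂ) from funext hφ1,
        Matrix.diagonal_one]
    rw [Matrix.conjTranspose_mul, Matrix.mul_assoc, ← Matrix.mul_assoc _ _ V, hDD,
      Matrix.one_mul]

private lemma chol_exists_zero {P : Mat N} (hP : P.PosDef) :
    ∃ U : Mat N, U.BlockTriangular id ∧ (∀ i, 0 < (U i i).re ∧ (U i i).im = 0) ∧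
      Uᴴ * U = P := by
  haveI : WellFoundedLT (Fin N) := inferInstance
  set L := LDL.lowerInv hP with hLdef
  set d := LDL.diagEntries hP with hddef
  have hL : ∀ i j : Fin N, i < j → L i j = 0 := fun i j h => LDL.lowerInv_triangular hP h
  have hLunit : IsUnit L.det := by
    obtain ⟨B, hBL, -⟩ := LDL.invertibleLowerInv hP
    have hone : B * L = (1 : Mat N) := by
      rw [hBL]
    have hdet1 : B.det * L.det = 1 := by
      rw [← Matrix.det_mul, hone, Matrix.det_one]
    exact IsUnit.of_mul_eq_one B.det (by rw [mul_comm]; exact hdet1)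
  haveI : Invertible L := L.invertibleOfIsUnitDet hLunit
  have hLdet : L.det ≠ 0 := hLunit.ne_zero
  have hrow : ∀ i, star (L i) ≠ 0 := by
    intro i h
    apply hLdet
    apply Matrix.det_eq_zero_of_row_eq_zero i
    intro j
    have := congrFun h j
    simpa using this
  have hd : ∀ i, 0 < (d i).re ∧ (d i).im = 0 := by
    intro i
    have hpos := hP.dotProduct_mulVec_pos (hrow i)
    have : d i = star (star (L i)) ⬝ᵥ (P *ᵥ star (L i)) := by
      rw [hddef]
      exact dotProduct_comm _ _
    rw [this]
    rw [Complex.lt_def] at hpos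
    exact ⟨by simpa using hpos.1, by simpa using hpos.2.symm⟩
  set s : Mat N := Matrix.diagonal fun i => ((Real.sqrt (d i).re : ℝ) : ℂ) with hsdef
  have hdiag : LDL.diag hP = Matrix.diagonal d := by
    rw [LDL.diag, hddef]
  have hss : s * s = LDL.diag hP := by
    rw [hsdef, Matrix.diagonal_mul_diagonal, hdiag]
    refine congrArg Matrix.diagonal (funext fun i => ?_)
    rw [← Complex.ofReal_mul, Real.mul_self_sqrt (hd i).1.le]
    exact Complex.ext rfl (by simpa using (hd i).2.symm)
  have hsH : sᴴ = s := by
    rw [hsdef, Matrix.diagonal_conjTranspose]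
    refine congrArg Matrix.diagonal (funext fun i => ?_)
    show star (((Real.sqrt (d i).re : ℝ) : ℂ)) = _
    exact Complex.conj_ofReal _
  haveI : Invertible Lᴴ := Matrix.invertibleConjTranspose L
  set V : Mat N := s * (Lᴴ)⁻¹ with hVdef
  have hVP : Vᴴ * V = P := by
    have hVH : Vᴴ = L⁻¹ * s := by
      rw [hVdef, Matrix.conjTranspose_mul, hsH, Matrix.conjTranspose_nonsing_inv,
        Matrix.conjTranspose_conjTranspose]
    rw [hVH, hVdef]
    calc L⁻¹ * s * (s * (Lᴴ)⁻¹) = L⁻¹ * (s * s) * (Lᴴ)⁻¹ := by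
          rw [Matrix.mul_assoc, Matrix.mul_assoc, Matrix.mul_assoc]
    _ = L⁻¹ * (L * P * Lᴴ) * (Lᴴ)⁻¹ := by rw [hss, LDL.diag_eq_lowerInv_conj]
    _ = (L⁻¹ * L) * P * (Lᴴ * (Lᴴ)⁻¹) := by
          simp only [Matrix.mul_assoc]
    _ = P := by
          rw [Matrix.inv_mul_of_invertible, Matrix.mul_inv_of_invertible,
            Matrix.one_mul, Matrix.mul_one]
  have hWt : (Lᴴ).BlockTriangular id := by
    intro i j h
    rw [Matrix.conjTranspose_apply, hL j i h, star_zero]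
  have hVt : V.BlockTriangular id := by
    rw [hVdef]
    exact (Matrix.blockTriangular_diagonal _).mul
      (Matrix.blockTriangular_inv_of_blockTriangular hWt)
  have hdV : IsUnit V.det := isUnit_det_of_cholesky hP hVP
  obtain ⟨U, hUt, hUd, hUe⟩ := phase_fix hVt hdV
  exact ⟨U, hUt, hUd, by rw [hUe, hVP]⟩

private lemma chol_exists (a : Fin 2) {P : Mat N} (hP : P.PosDef) :
    ∃ U : Mat N, Triangular a U ∧ Uᴴ * U = P := by
  by_cases ha : a = 0
  · obtain ⟨U, hUt, hUd, hUe⟩ := chol_exists_zero hP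
    refine ⟨U, ⟨fun i j hij => hUt ?_, hUd⟩, hUe⟩
    rw [ha] at hij
    simpa using hij
  · have hrev : (Fin.rev ∘ Fin.rev : Fin N → Fin N) = id := by
      funext k; simp [Function.comp]
    obtain ⟨U₀, hUt, hUd, hUe⟩ := chol_exists_zero (posDef_submatrix hP (Fin.revPerm))
    refine ⟨U₀.submatrix Fin.rev Fin.rev, ⟨fun i j hij => ?_, fun i => hUd _⟩, ?_⟩
    · rw [if_neg ha] at hij
      exact hUt (show (Fin.rev j : Fin N) < Fin.rev i by simpa [Fin.rev_lt_rev] using hij)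
    · ext i j
      simp only [Matrix.mul_apply, Matrix.submatrix_apply, Matrix.conjTranspose_apply]
      calc ∑ k, star (U₀ (Fin.rev k) (Fin.rev i)) * U₀ (Fin.rev k) (Fin.rev j)
          = ∑ k, star (U₀ k (Fin.rev i)) * U₀ k (Fin.rev j) := by
            refine Fintype.sum_equiv (Fin.revPerm) _ _ fun k => ?_
            simp
      _ = (U₀ᴴ * U₀) (Fin.rev i) (Fin.rev j) := by
            rw [Matrix.mul_apply]
            simp [Matrix.conjTranspose_apply]
      _ = P i j := by rw [hUe]; simp

end Cholesky

open scoped Matrix.Norms.L2Operator in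
/-- Cholesky factorization: existence, uniqueness, and Lipschitz continuity on the set of
positive definite Hermitian matrices with eigenvalues in `[ε, ε⁻¹]`. -/
theorem statement_5 (n : ℕ) (hn : 1 ≤ n) (a : Fin 2) :
    (∀ P : Mat n, P.PosDef → ∃! U : Mat n, Triangular a U ∧ Uᴴ * U = P) ∧
    ∀ ε : ℝ, 0 < ε → ∃ C : ℝ, 0 < C ∧
      ∀ P P' U U' : Mat n, P.PosDef → P'.PosDef →
        (P - (ε : ℂ) • (1 : Mat n)).PosSemidef →
        (((ε⁻¹ : ℝ) : ℂ) • (1 : Mat n) - P).PosSemidef →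
        (P' - (ε : ℂ) • (1 : Mat n)).PosSemidef →
        (((ε⁻¹ : ℝ) : ℂ) • (1 : Mat n) - P').PosSemidef →
        Triangular a U → Uᴴ * U = P → Triangular a U' → U'ᴴ * U' = P' →
        opNorm (U - U') ≤ C * opNorm (P - P') := by
  constructor
  · intro P hP
    obtain ⟨U, hUt, hUe⟩ := chol_exists a hP
    refine ⟨U, ⟨hUt, hUe⟩, ?_⟩
    rintro V ⟨hVt, hVe⟩
    exact chol_unique hUt hVt (isUnit_det_of_cholesky hP hUe)
      (isUnit_det_of_cholesky hP hVe) (by rw [hVe, hUe])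
  · intro ε hε
    set s := Real.sqrt ε⁻¹ with hs
    have hs0 : 0 ≤ s := Real.sqrt_nonneg _
    refine ⟨(n : ℝ) ^ 2 * s ^ 3 + 1, by positivity, ?_⟩
    intro P P' U U' hP hP' hPl hPu hP'l hP'u hUt hUe hU't hU'e
    have hdU : IsUnit U.det := isUnit_det_of_cholesky hP hUe
    have hdU' : IsUnit U'.det := isUnit_det_of_cholesky hP' hU'e
    have hUn : opNorm U ≤ s := opNorm_le_sqrt hε hUe hPu
    have hUinvn : opNorm U⁻¹ ≤ s := opNorm_inv_le_sqrt hε hUe hdU hPl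
    have hU'invHn : opNorm (U'ᴴ)⁻¹ ≤ s := by
      rw [← Matrix.conjTranspose_nonsing_inv, opNorm_eq_norm,
        Matrix.l2_opNorm_conjTranspose, ← opNorm_eq_norm]
      exact opNorm_inv_le_sqrt hε hU'e hdU' hP'l
    rw [opNorm_eq_norm, opNorm_eq_norm] at *
    set d := ‖P - P'‖ with hd
    have hd0 : 0 ≤ d := norm_nonneg _
    have hdiff : U' - U = (U' * U⁻¹ - 1) * U := by
      rw [Matrix.sub_mul, Matrix.one_mul, Matrix.mul_assoc,
        Matrix.nonsing_inv_mul _ hdU, Matrix.mul_one]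
    have hGn : ‖(U'ᴴ)⁻¹ * (U'ᴴ * U' - Uᴴ * U) * U⁻¹‖ ≤ s * d * s := by
      rw [hUe, hU'e]
      calc ‖(U'ᴴ)⁻¹ * (P' - P) * U⁻¹‖ ≤ ‖(U'ᴴ)⁻¹ * (P' - P)‖ * ‖U⁻¹‖ :=
            Matrix.l2_opNorm_mul _ _
      _ ≤ (‖(U'ᴴ)⁻¹‖ * ‖P' - P‖) * ‖U⁻¹‖ :=
            mul_le_mul_of_nonneg_right (Matrix.l2_opNorm_mul _ _) (norm_nonneg _)
      _ = (‖(U'ᴴ)⁻¹‖ * d) * ‖U⁻¹‖ := by rw [hd, norm_sub_rev]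
      _ ≤ (s * d) * s := by
            refine mul_le_mul (mul_le_mul_of_nonneg_right hU'invHn hd0) hUinvn
              (norm_nonneg _) (by positivity)
    have hXn : ‖U' * U⁻¹ - 1‖ ≤ (n : ℝ) ^ 2 * (s * d * s) := by
      calc ‖U' * U⁻¹ - 1‖ ≤ ∑ i, ∑ j, ‖(U' * U⁻¹ - 1) i j‖ := by
            rw [← opNorm_eq_norm]; exact opNorm_le_sum_abs _
      _ ≤ ∑ i, ∑ j, ‖((U'ᴴ)⁻¹ * (U'ᴴ * U' - Uᴴ * U) * U⁻¹) i j‖ :=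
            Finset.sum_le_sum fun i _ => Finset.sum_le_sum fun j _ =>
              core_bound hUt hU't hdU hdU' i j
      _ ≤ ∑ _i : Fin n, ∑ _j : Fin n, ‖(U'ᴴ)⁻¹ * (U'ᴴ * U' - Uᴴ * U) * U⁻¹‖ :=
            Finset.sum_le_sum fun i _ => Finset.sum_le_sum fun j _ => by
              rw [← opNorm_eq_norm]; exact abs_entry_le _ i j
      _ = (n : ℝ) ^ 2 * ‖(U'ᴴ)⁻¹ * (U'ᴴ * U' - Uᴴ * U) * U⁻¹‖ := by
            simp [Finset.sum_const, Finset.card_univ]; ring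
      _ ≤ (n : ℝ) ^ 2 * (s * d * s) := by
            exact mul_le_mul_of_nonneg_left hGn (by positivity)
    have hfinal : ‖U - U'‖ ≤ (n : ℝ) ^ 2 * (s * d * s) * s := by
      calc ‖U - U'‖ = ‖U' - U‖ := norm_sub_rev _ _
      _ = ‖(U' * U⁻¹ - 1) * U‖ := by rw [hdiff]
      _ ≤ ‖U' * U⁻¹ - 1‖ * ‖U‖ := Matrix.l2_opNorm_mul _ _
      _ ≤ ((n : ℝ) ^ 2 * (s * d * s)) * s :=
            mul_le_mul hXn hUn (norm_nonneg _) (by positivity)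
    calc ‖U - U'‖ ≤ (n : ℝ) ^ 2 * (s * d * s) * s := hfinal
    _ = ((n : ℝ) ^ 2 * s ^ 3) * d := by ring
    _ ≤ ((n : ℝ) ^ 2 * s ^ 3 + 1) * d := by nlinarith


end NLFT
end
end
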